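/- Let τ > 0 and b ∈ ℝ, and let exp_τ(b,·) denote the delayed exponential function. Then exp_τ(b,·) is continuous on [−τ, ∞), equals 1 identically on [−τ, 0], and is differentiable at every t > 0 with derivative d/dt exp_τ(b, t) = b · exp_τ(b, t − τ). In particular, u(t) := exp_τ(b, t) solves the pure delay equation u′(t) = b u(t − τ) for t > 0 with initial history u ≡ 1 on [−τ, 0]. -/

import Mathlib

open Real Set

/-- The delayed exponential function: `exp_τ(b, t) = 0` for `t < -τ`, and
`exp_τ(b, t) = 1 + ∑_{k=1}^{⌊t/τ⌋+1} b^k (t - (k-1)τ)^k / k!` for `t ≥ -τ`. -/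
noncomputable def delayedExp (τ b t : ℝ) : ℝ :=
  if t < -τ then 0
  else 1 + ∑ k ∈ Finset.Icc 1 (⌊t / τ⌋ + 1).toNat,
    b ^ k * (t - ((k : ℝ) - 1) * τ) ^ k / (Nat.factorial k)

open Filter Asymptotics in
lemma maxpow_hasDerivAt (k : ℕ) (x : ℝ) :
    HasDerivAt (fun y : ℝ => max y 0 ^ (k + 2)) ((k + 2) * max x 0 ^ (k + 1)) x := by
  rcases lt_trichotomy x 0 with hx | rfl | hx
  · have h0 : HasDerivAt (fun _ : ℝ => (0:ℝ)) 0 x := hasDerivAt_const x 0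
    have : (fun y : ℝ => max y 0 ^ (k + 2)) =ᶠ[nhds x] fun _ => (0:ℝ) := by
      filter_upwards [Iio_mem_nhds hx] with y (hy : y < 0)
      simp [max_eq_right hy.le, zero_pow]
    have h := h0.congr_of_eventuallyEq this
    simpa [max_eq_right hx.le, zero_pow] using h
  · rw [hasDerivAt_iff_isLittleO]
    simp only [max_self, le_refl, sub_zero, smul_zero, zero_pow, mul_zero,
      Nat.succ_ne_zero, sub_zero]
    have h1 : (fun y : ℝ => max y 0 ^ (k + 2)) =O[nhds (0:ℝ)] fun y : ℝ => y ^ 2 := by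
      apply IsBigO.of_bound 1
      filter_upwards [Metric.ball_mem_nhds (0:ℝ) one_pos] with y hy
      rw [Metric.mem_ball, Real.dist_eq, sub_zero] at hy
      have h2 : |max y 0| ≤ |y| := by
        rcases le_or_gt y 0 with h | h
        · simp [max_eq_right h, abs_nonneg]
        · simp [max_eq_left h.le]
      calc ‖max y 0 ^ (k + 2)‖ = |max y 0| ^ (k + 2) := by
            rw [Real.norm_eq_abs, abs_pow]
        _ ≤ |y| ^ (k + 2) := pow_le_pow_left₀ (abs_nonneg _) h2 _
        _ ≤ |y| ^ 2 := pow_le_pow_of_le_one (abs_nonneg _) hy.le (by omega)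
        _ = ‖y ^ 2‖ := by rw [Real.norm_eq_abs, abs_pow]
        _ ≤ 1 * ‖y ^ 2‖ := by rw [one_mul]
    have := h1.trans_isLittleO (isLittleO_pow_id (by norm_num : 1 < 2))
    simpa using this
  · have h0 : HasDerivAt (fun y : ℝ => y ^ (k + 2)) ((k + 2) * x ^ (k + 1)) x := by
      simpa using hasDerivAt_pow (k + 2) x
    have : (fun y : ℝ => y ^ (k + 2)) =ᶠ[nhds x] fun y => max y 0 ^ (k + 2) := by
      filter_upwards [Ioi_mem_nhds hx] with y (hy : 0 < y)
      simp [max_eq_left hy.le]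
    have h := h0.congr_of_eventuallyEq this.symm
    simpa [max_eq_left hx.le] using h

lemma term_hasDerivAt (a x : ℝ) (k : ℕ) (h : 0 < k ∨ a < x) :
    HasDerivAt (fun y : ℝ => max (y - a) 0 ^ (k + 1)) (((k:ℝ) + 1) * max (x - a) 0 ^ k) x := by
  rcases k with _ | k
  · rcases h with h | h
    · omega
    · have h0 : HasDerivAt (fun y : ℝ => y - a) 1 x := (hasDerivAt_id x).sub_const a
      have he : (fun y : ℝ => y - a) =ᶠ[nhds x] fun y => max (y - a) 0 ^ (0 + 1) := by
        filter_upwards [Ioi_mem_nhds h] with y (hy : a < y)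
        simp [max_eq_left (sub_nonneg.2 hy.le)]
      have := h0.congr_of_eventuallyEq he.symm
      simpa using this
  · have h1 : HasDerivAt (fun y : ℝ => y - a) 1 x := (hasDerivAt_id x).sub_const a
    have h2 := (maxpow_hasDerivAt k (x - a)).comp x h1
    have : ((k + 1 : ℕ):ℝ) + 1 = (k:ℝ) + 2 := by push_cast; ring
    rw [this]
    simpa [Function.comp_def] using h2

noncomputable def dexpAux (τ b : ℝ) (N : ℕ) (t : ℝ) : ℝ :=
  1 + ∑ k ∈ Finset.Icc 1 N, b ^ k * max (t - ((k : ℝ) - 1) * τ) 0 ^ k / (Nat.factorial k)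

lemma dexpAux_continuous (τ b : ℝ) (N : ℕ) : Continuous (dexpAux τ b N) := by
  unfold dexpAux
  apply continuous_const.add
  apply continuous_finset_sum
  intro k _
  exact (continuous_const.mul (((continuous_id.sub continuous_const).max
    continuous_const).pow k)).div_const _

lemma delayedExp_eq_aux (τ b : ℝ) (hτ : 0 < τ) {t : ℝ} (ht : -τ ≤ t) {N : ℕ}
    (hN : (⌊t / τ⌋ + 1).toNat ≤ N) : delayedExp τ b t = dexpAux τ b N t := by
  rw [delayedExp, if_neg (not_lt.2 ht), dexpAux]
  congr 1
  have hsub : Finset.Icc 1 (⌊t / τ⌋ + 1).toNat ⊆ Finset.Icc 1 N :=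
    Finset.Icc_subset_Icc_right hN
  rw [← Finset.sum_subset hsub ?_]
  · apply Finset.sum_congr rfl
    intro k hk
    rw [Finset.mem_Icc] at hk
    have h1 : ((k:ℤ) - 1) ≤ ⌊t / τ⌋ := by omega
    have h2 : ((k:ℝ) - 1) ≤ t / τ := by
      calc ((k:ℝ) - 1) = (((k:ℤ) - 1 : ℤ) : ℝ) := by push_cast; ring
        _ ≤ (⌊t / τ⌋ : ℝ) := by exact_mod_cast h1
        _ ≤ t / τ := Int.floor_le _
    have h3 : ((k:ℝ) - 1) * τ ≤ t := by
      rw [← le_div_iff₀ hτ]; exact h2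
    rw [max_eq_left (sub_nonneg.2 h3)]
  · intro k hk hk'
    rw [Finset.mem_Icc] at hk hk'
    have h1 : ⌊t / τ⌋ + 1 ≤ (k:ℤ) - 1 := by omega
    have h2 : t / τ < (k:ℝ) - 1 := by
      calc t / τ < (⌊t / τ⌋ : ℝ) + 1 := Int.lt_floor_add_one _
        _ ≤ ((k:ℝ) - 1) := by exact_mod_cast h1
    have h3 : t < ((k:ℝ) - 1) * τ := by
      rw [← div_lt_iff₀ hτ]; exact h2
    have h4 : max (t - ((k:ℝ) - 1) * τ) 0 = 0 := max_eq_right (by linarith)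
    rw [h4, zero_pow (by omega), mul_zero, zero_div]

lemma dexpAux_hasDerivAt (τ b : ℝ) (N : ℕ) {t : ℝ} (ht : 0 < t) :
    HasDerivAt (dexpAux τ b (N + 1)) (b * dexpAux τ b N (t - τ)) t := by
  have key : ∀ k ∈ Finset.Icc 1 (N + 1),
      HasDerivAt (fun s => b ^ k * max (s - ((k : ℝ) - 1) * τ) 0 ^ k / (Nat.factorial k))
        (b ^ k * max (t - ((k : ℝ) - 1) * τ) 0 ^ (k - 1) / (Nat.factorial (k - 1))) t := by
    intro k hk
    rw [Finset.mem_Icc] at hk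
    obtain ⟨j, rfl⟩ : ∃ j, k = j + 1 := ⟨k - 1, by omega⟩
    have hc : (0:ℝ) < j ∨ (j:ℝ) * τ < t := by
      rcases Nat.eq_zero_or_pos j with rfl | hj
      · right; simpa using ht
      · left; exact_mod_cast hj
    have h0 := term_hasDerivAt ((j:ℝ) * τ) t j (by
      rcases Nat.eq_zero_or_pos j with rfl | hj
      · right; simpa using ht
      · left; exact hj)
    have h1 := h0.const_mul (b ^ (j + 1) / (Nat.factorial (j + 1)))
    simp only [Nat.add_sub_cancel, Nat.cast_add, Nat.cast_one, add_sub_cancel_right]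
    have hfac : (Nat.factorial (j + 1) : ℝ) = ((j:ℝ) + 1) * Nat.factorial j := by
      rw [Nat.factorial_succ]; push_cast; ring
    have hfj : (Nat.factorial j : ℝ) ≠ 0 := by
      exact_mod_cast Nat.factorial_ne_zero j
    have hj1 : ((j:ℝ) + 1) ≠ 0 := by positivity
    convert h1 using 1
    · rfl
    · rfl
    · funext s; ring
    · rw [hfac]; field_simp
  have hsum := HasDerivAt.fun_sum key
  have hD : HasDerivAt (dexpAux τ b (N + 1))
      (∑ k ∈ Finset.Icc 1 (N + 1),
        b ^ k * max (t - ((k : ℝ) - 1) * τ) 0 ^ (k - 1) / (Nat.factorial (k - 1))) t :=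
    hsum.const_add 1
  convert hD using 1
  -- identity: b * dexpAux τ b N (t - τ) = ∑ ...
  have hmap : Finset.Icc 1 (N + 1) = (Finset.Icc 0 N).map (addRightEmbedding 1) := by
    rw [Finset.map_add_right_Icc]
  rw [hmap, Finset.sum_map]
  simp only [addRightEmbedding_apply, Nat.add_sub_cancel]
  have hins : Finset.Icc 0 N = insert 0 (Finset.Icc 1 N) := by
    ext x; simp; omega
  rw [hins, Finset.sum_insert (by simp)]
  rw [dexpAux, mul_add, mul_one]
  congr 1
  · push_cast; simp [Nat.factorial]
  · rw [Finset.mul_sum]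
    apply Finset.sum_congr rfl
    intro j hj
    have h5 : t - (((j:ℕ) + 1 : ℝ) - 1) * τ = t - τ - ((j:ℝ) - 1) * τ := by push_cast; ring
    push_cast
    push_cast at h5
    rw [h5]
    ring

lemma floor_div_lt {τ t s : ℝ} (hτ : 0 < τ) (hs : s < t + τ) : ⌊s / τ⌋ ≤ ⌊t / τ⌋ + 1 := by
  have h1 : s / τ < (t + τ) / τ := (div_lt_div_iff_of_pos_right hτ).2 hs
  have h2 : (t + τ) / τ = t / τ + 1 := by field_simp
  have h3 : ⌊s / τ⌋ ≤ ⌊t / τ + 1⌋ := Int.floor_le_floor (by linarith)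
  rwa [Int.floor_add_one] at h3

/-- The delayed exponential is continuous on `[-τ, ∞)`, is identically `1` on `[-τ, 0]`,
and is differentiable at every `t > 0` with derivative `b · exp_τ(b, t - τ)`; in particular
it solves the pure delay equation `u'(t) = b u(t - τ)` with history `u ≡ 1` on `[-τ, 0]`. -/
theorem delayedExp_properties (τ b : ℝ) (hτ : 0 < τ) :
    ContinuousOn (delayedExp τ b) (Ici (-τ)) ∧
    (∀ t ∈ Icc (-τ) (0 : ℝ), delayedExp τ b t = 1) ∧
    (∀ t : ℝ, 0 < t → HasDerivAt (delayedExp τ b) (b * delayedExp τ b (t - τ)) t) := by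
  refine ⟨?_, ?_, ?_⟩
  · intro t ht
    have ht' : -τ ≤ t := ht
    set N := (⌊t / τ⌋ + 2).toNat with hNdef
    have hset : Ico (-τ) (t + τ) ∈ nhdsWithin t (Ici (-τ)) := by
      rw [← Ici_inter_Iio]
      exact Filter.inter_mem self_mem_nhdsWithin
        (mem_nhdsWithin_of_mem_nhds (Iio_mem_nhds (by linarith)))
    have heq : ∀ s ∈ Ico (-τ) (t + τ), delayedExp τ b s = dexpAux τ b N s := by
      intro s hs
      apply delayedExp_eq_aux τ b hτ hs.1
      have := floor_div_lt hτ hs.2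
      omega
    have hc := (dexpAux_continuous τ b N).continuousWithinAt
      (s := Ico (-τ) (t + τ)) (x := t)
    exact (hc.congr heq (heq t ⟨ht', by linarith⟩)).mono_of_mem_nhdsWithin hset
  · intro t ht
    obtain ⟨h1, h2⟩ := ht
    have hfl : ⌊t / τ⌋ ≤ 0 := Int.floor_nonpos (div_nonpos_of_nonpos_of_nonneg h2 hτ.le)
    rw [delayedExp_eq_aux τ b hτ h1 (N := 1) (by omega), dexpAux]
    simp [max_eq_right h2]
  · intro t ht
    set N := (⌊t / τ⌋ + 1).toNat with hNdef
    have hfl : 0 ≤ ⌊t / τ⌋ := Int.floor_nonneg.2 (by positivity)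
    have heq : ∀ s ∈ Ioo (-τ) (t + τ), delayedExp τ b s = dexpAux τ b (N + 1) s := by
      intro s hs
      apply delayedExp_eq_aux τ b hτ hs.1.le
      have := floor_div_lt hτ hs.2
      omega
    have hmem : Ioo (-τ) (t + τ) ∈ nhds t := Ioo_mem_nhds (by linarith) (by linarith)
    have hD := dexpAux_hasDerivAt τ b N ht
    have hval : dexpAux τ b N (t - τ) = delayedExp τ b (t - τ) := by
      symm
      apply delayedExp_eq_aux τ b hτ (by linarith)
      have hdiv : (t - τ) / τ = t / τ - 1 := by field_simp
      rw [hdiv, Int.floor_sub_one]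
      omega
    rw [← hval]
    exact hD.congr_of_eventuallyEq (Filter.eventuallyEq_of_mem hmem heq)
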